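/- Let S be a finite subset of ℝ, Λ a finite index set, and P, P' two probability measures on S^Λ giving positive weight to every configuration. Suppose that for every site i ∈ Λ and all configurations ξ ≤ ξ' (pointwise), the single-site conditional distribution of P at i given ξ off i is stochastically dominated by that of P' at i given ξ' off i. Then P is stochastically dominated by P', i.e., ∫ f dP ≤ ∫ f dP' for every monotone (coordinatewise increasing) function f : S^Λ → ℝ. -/

import Mathlib

open Finset

open Finset Function Matrix

set_option linter.unusedSectionVars false

section HolleyAux
variable {Λ : Type*} [Fintype Λ] [DecidableEq Λ] [Nonempty Λ] {S : Finset ℝ}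

noncomputable def condC (P : (Λ → S) → ℝ) (i : Λ) (ξ : Λ → S) (s : S) : ℝ :=
  P (update ξ i s) / ∑ t : S, P (update ξ i t)

noncomputable def ker (P : (Λ → S) → ℝ) : Matrix (Λ → S) (Λ → S) ℝ :=
  Matrix.of fun ξ η => (Fintype.card Λ : ℝ)⁻¹ *
    ∑ i : Λ, ∑ s : S, condC P i ξ s * (if update ξ i s = η then 1 else 0)

variable {P : (Λ → S) → ℝ}

lemma Zpos (hS : S.Nonempty) (hP : ∀ ξ, 0 < P ξ) (i : Λ) (ξ : Λ → S) :
    0 < ∑ t : S, P (update ξ i t) := by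
  haveI : Nonempty S := ⟨⟨hS.choose, hS.choose_spec⟩⟩
  exact Finset.sum_pos (fun t _ => hP _) univ_nonempty

lemma condC_nonneg (hS : S.Nonempty) (hP : ∀ ξ, 0 < P ξ) (i : Λ) (ξ : Λ → S) (s : S) :
    0 ≤ condC P i ξ s :=
  le_of_lt (div_pos (hP _) (Zpos hS hP i ξ))

lemma condC_sum (hS : S.Nonempty) (hP : ∀ ξ, 0 < P ξ) (i : Λ) (ξ : Λ → S) :
    ∑ s : S, condC P i ξ s = 1 := by
  simp only [condC]
  rw [← Finset.sum_div, div_self (Zpos hS hP i ξ).ne']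

lemma ker_nonneg (hS : S.Nonempty) (hP : ∀ ξ, 0 < P ξ) (ξ η : Λ → S) :
    0 ≤ ker P ξ η := by
  apply mul_nonneg (by positivity)
  refine Finset.sum_nonneg fun i _ => Finset.sum_nonneg fun s _ => ?_
  refine mul_nonneg (condC_nonneg hS hP i ξ s) (by positivity)

lemma ker_expect (f : (Λ → S) → ℝ) (ξ : Λ → S) :
    ∑ η : Λ → S, ker P ξ η * f η = (Fintype.card Λ : ℝ)⁻¹ *
      ∑ i : Λ, ∑ s : S, condC P i ξ s * f (update ξ i s) := by
  simp only [ker, Matrix.of_apply, mul_assoc, Finset.sum_mul, ite_mul, one_mul,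
    zero_mul, ← Finset.mul_sum]
  congr 1
  rw [Finset.sum_comm]
  refine Finset.sum_congr rfl fun i _ => ?_
  rw [Finset.sum_comm]
  refine Finset.sum_congr rfl fun s _ => ?_
  rw [← Finset.mul_sum, Finset.sum_ite_eq Finset.univ (update ξ i s) f]
  simp

lemma ker_rowsum (hS : S.Nonempty) (hP : ∀ ξ, 0 < P ξ) (ξ : Λ → S) :
    ∑ η : Λ → S, ker P ξ η = 1 := by
  have := ker_expect (P := P) (fun _ => (1:ℝ)) ξ
  simp only [mul_one] at this
  rw [this, Finset.sum_congr rfl (fun i _ => condC_sum hS hP i ξ)]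
  simp [Finset.card_univ]

end HolleyAux

section Part2
variable {Λ : Type*} [Fintype Λ] [DecidableEq Λ] [Nonempty Λ] {S : Finset ℝ}
variable {P : (Λ → S) → ℝ}

lemma sum_update_fiber (i : Λ) (η : Λ → S) (F : (Λ → S) → ℝ) :
    ∑ ξ : Λ → S, (if update ξ i (η i) = η then F ξ else 0) = ∑ t : S, F (update η i t) := by
  rw [← Finset.sum_filter]
  refine Finset.sum_nbij' (i := fun ξ => ξ i) (j := fun t => update η i t) ?_ ?_ ?_ ?_ ?_
  · intro ξ hξ; exact Finset.mem_univ _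
  · intro t ht
    simp only [Finset.mem_filter, Finset.mem_univ, true_and]
    simp [Function.update_idem]
  · intro ξ hξ
    simp only [Finset.mem_filter, Finset.mem_univ, true_and] at hξ
    show update η i (ξ i) = ξ
    funext j
    by_cases hj : j = i
    · subst hj; simp
    · rw [update_of_ne hj]
      have := congrFun hξ j
      rw [update_of_ne hj] at this
      exact this.symm
  · intro t ht; simp
  · intro ξ hξ
    simp only [Finset.mem_filter, Finset.mem_univ, true_and] at hξ
    have h5 : update η i (ξ i) = ξ := by
      funext j
      by_cases hj : j = i
      · subst hj; simp
      · rw [update_of_ne hj]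
        have := congrFun hξ j
        rw [update_of_ne hj] at this
        exact this.symm
    show F ξ = F (update η i (ξ i))
    rw [h5]

lemma ker_stationary (hS : S.Nonempty) (hP : ∀ ξ, 0 < P ξ) (η : Λ → S) :
    ∑ ξ : Λ → S, P ξ * ker P ξ η = P η := by
  simp only [ker, Matrix.of_apply]
  have h1 : ∀ ξ : Λ → S, P ξ * ((Fintype.card Λ : ℝ)⁻¹ *
      ∑ i : Λ, ∑ s : S, condC P i ξ s * (if update ξ i s = η then 1 else 0)) =
      (Fintype.card Λ : ℝ)⁻¹ *
      ∑ i : Λ, ∑ s : S, P ξ * condC P i ξ s * (if update ξ i s = η then 1 else 0) := by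
    intro ξ
    rw [mul_left_comm]
    congr 1
    rw [Finset.mul_sum]
    refine Finset.sum_congr rfl fun i _ => ?_
    rw [Finset.mul_sum]
    refine Finset.sum_congr rfl fun s _ => ?_
    ring
  rw [Finset.sum_congr rfl fun ξ _ => h1 ξ, ← Finset.mul_sum, Finset.sum_comm]
  have h2 : ∀ i : Λ, ∑ ξ : Λ → S, ∑ s : S,
      P ξ * condC P i ξ s * (if update ξ i s = η then 1 else 0) = P η := by
    intro i
    have h3 : ∀ ξ : Λ → S, ∑ s : S, P ξ * condC P i ξ s * (if update ξ i s = η then 1 else 0)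
        = (if update ξ i (η i) = η then P ξ * condC P i ξ (η i) else 0) := by
      intro ξ
      rw [Finset.sum_eq_single (η i)]
      · split_ifs <;> simp_all
      · intro b _ hb
        have : update ξ i b ≠ η := by
          intro h; apply hb
          have := congrFun h i; simpa using this
        simp [this]
      · intro h; exact absurd (Finset.mem_univ _) h
    rw [Finset.sum_congr rfl fun ξ _ => h3 ξ, sum_update_fiber]
    have h4 : ∀ t : S, condC P i (update η i t) (η i) =
        P η / ∑ u : S, P (update η i u) := by
      intro t
      simp only [condC, Function.update_idem, Function.update_eq_self]
    rw [Finset.sum_congr rfl fun t _ => by rw [h4 t], ← Finset.sum_mul,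
      mul_div_cancel₀ _ (Zpos hS hP i η).ne']
  rw [Finset.sum_congr rfl fun i _ => h2 i, Finset.sum_const, Finset.card_univ, nsmul_eq_mul,
    ← mul_assoc, inv_mul_cancel₀ (by exact_mod_cast Fintype.card_ne_zero), one_mul]

end Part2

section Part3
variable {Λ : Type*} [Fintype Λ] [DecidableEq Λ] [Nonempty Λ] {S : Finset ℝ}
variable {P P' : (Λ → S) → ℝ}

lemma update_le_update_left {ξ ξ' : Λ → S} (h : ξ ≤ ξ') (i : Λ) (s : S) :
    update ξ i s ≤ update ξ' i s := by
  intro j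
  by_cases hj : j = i
  · subst hj; simp
  · rw [update_of_ne hj, update_of_ne hj]; exact h j

lemma update_monotone (ξ : Λ → S) (i : Λ) : Monotone fun s : S => update ξ i s := by
  intro s t hst j
  show update ξ i s j ≤ update ξ i t j
  by_cases hj : j = i
  · subst hj; simpa using hst
  · rw [update_of_ne hj, update_of_ne hj]

lemma condC_expect (i : Λ) (ξ : Λ → S) (g : S → ℝ) :
    ∑ s : S, condC P i ξ s * g s =
      (∑ s : S, P (update ξ i s) * g s) / (∑ s : S, P (update ξ i s)) := by
  rw [Finset.sum_div]
  exact Finset.sum_congr rfl fun s _ => by rw [condC, div_mul_eq_mul_div]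

lemma cross_step (hS : S.Nonempty) (hPpos : ∀ ξ, 0 < P ξ)
    (hcond : ∀ (i : Λ) (ξ ξ' : Λ → S), ξ ≤ ξ' →
      ∀ g : S → ℝ, Monotone g →
        (∑ s : S, P (Function.update ξ i s) * g s) /
          (∑ s : S, P (Function.update ξ i s)) ≤
        (∑ s : S, P' (Function.update ξ' i s) * g s) /
          (∑ s : S, P' (Function.update ξ' i s)))
    (f : (Λ → S) → ℝ) (hf : Monotone f) {ξ ξ' : Λ → S} (h : ξ ≤ ξ') :
    ∑ η : Λ → S, ker P ξ η * f η ≤ ∑ η : Λ → S, ker P' ξ' η * f η := by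
  rw [ker_expect, ker_expect]
  refine mul_le_mul_of_nonneg_left ?_ (by positivity)
  refine Finset.sum_le_sum fun i _ => ?_
  calc ∑ s : S, condC P i ξ s * f (update ξ i s)
      ≤ ∑ s : S, condC P i ξ s * f (update ξ' i s) := by
        refine Finset.sum_le_sum fun s _ => ?_
        exact mul_le_mul_of_nonneg_left (hf (update_le_update_left h i s))
          (condC_nonneg hS hPpos i ξ s)
    _ ≤ ∑ s : S, condC P' i ξ' s * f (update ξ' i s) := by
        rw [condC_expect, condC_expect]
        exact hcond i ξ ξ' h _ (hf.comp (update_monotone ξ' i))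

open Classical in
noncomputable def env (g : (Λ → S) → ℝ) (ξ : Λ → S) : ℝ :=
  (Finset.univ.filter fun ζ : Λ → S => ζ ≤ ξ).sup' ⟨ξ, by simp⟩ g

open Classical in
lemma env_monotone (g : (Λ → S) → ℝ) : Monotone (env g) := by
  intro ξ ξ' h
  refine Finset.sup'_le _ _ fun ζ hζ => ?_
  simp only [Finset.mem_filter, Finset.mem_univ, true_and] at hζ
  refine Finset.le_sup' g ?_
  simp only [Finset.mem_filter, Finset.mem_univ, true_and]
  exact le_trans hζ h

open Classical in
lemma le_env (g : (Λ → S) → ℝ) (ξ : Λ → S) : g ξ ≤ env g ξ :=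
  Finset.le_sup' g (by simp)

open Classical in
lemma env_le (g h : (Λ → S) → ℝ) (ξ : Λ → S) (hle : ∀ ζ, ζ ≤ ξ → g ζ ≤ h ξ) :
    env g ξ ≤ h ξ := by
  refine Finset.sup'_le _ _ fun ζ hζ => ?_
  simp only [Finset.mem_filter, Finset.mem_univ, true_and] at hζ
  exact hle ζ hζ

lemma vecMul_expect (μ : (Λ → S) → ℝ) (M : Matrix (Λ → S) (Λ → S) ℝ) (f : (Λ → S) → ℝ) :
    ∑ η : Λ → S, (μ ᵥ* M) η * f η = ∑ ξ : Λ → S, μ ξ * ∑ η : Λ → S, M ξ η * f η := by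
  simp only [Matrix.vecMul, dotProduct, Finset.sum_mul, Finset.mul_sum, mul_assoc]
  exact Finset.sum_comm

lemma step_preserve (hS : S.Nonempty) (hPpos : ∀ ξ, 0 < P ξ)
    (hcond : ∀ (i : Λ) (ξ ξ' : Λ → S), ξ ≤ ξ' →
      ∀ g : S → ℝ, Monotone g →
        (∑ s : S, P (Function.update ξ i s) * g s) /
          (∑ s : S, P (Function.update ξ i s)) ≤
        (∑ s : S, P' (Function.update ξ' i s) * g s) /
          (∑ s : S, P' (Function.update ξ' i s)))
    (μ μ' : (Λ → S) → ℝ) (hμ : ∀ ξ, 0 ≤ μ ξ) (hμ' : ∀ ξ, 0 ≤ μ' ξ)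
    (hdom : ∀ g : (Λ → S) → ℝ, Monotone g →
      ∑ ξ : Λ → S, μ ξ * g ξ ≤ ∑ ξ : Λ → S, μ' ξ * g ξ)
    (f : (Λ → S) → ℝ) (hf : Monotone f) :
    ∑ η : Λ → S, (μ ᵥ* ker P) η * f η ≤ ∑ η : Λ → S, (μ' ᵥ* ker P') η * f η := by
  rw [vecMul_expect, vecMul_expect]
  set Tf : (Λ → S) → ℝ := fun ξ => ∑ η : Λ → S, ker P ξ η * f η with hTf
  set T'f : (Λ → S) → ℝ := fun ξ => ∑ η : Λ → S, ker P' ξ η * f η with hT'f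
  have cross : ∀ ζ ξ : Λ → S, ζ ≤ ξ → Tf ζ ≤ T'f ξ :=
    fun ζ ξ h => cross_step hS hPpos hcond f hf h
  calc ∑ ξ : Λ → S, μ ξ * Tf ξ
      ≤ ∑ ξ : Λ → S, μ ξ * env Tf ξ :=
        Finset.sum_le_sum fun ξ _ => mul_le_mul_of_nonneg_left (le_env Tf ξ) (hμ ξ)
    _ ≤ ∑ ξ : Λ → S, μ' ξ * env Tf ξ := hdom _ (env_monotone Tf)
    _ ≤ ∑ ξ : Λ → S, μ' ξ * T'f ξ :=
        Finset.sum_le_sum fun ξ _ => mul_le_mul_of_nonneg_left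
          (env_le Tf T'f ξ fun ζ hζ => cross ζ ξ hζ) (hμ' ξ)

end Part3

section Doeblin
variable {X : Type*} [Fintype X] [DecidableEq X] [Nonempty X]

lemma pow_entry_nonneg {M : Matrix X X ℝ} (h : ∀ x y, 0 ≤ M x y) (n : ℕ) :
    ∀ x y, 0 ≤ (M ^ n) x y := by
  induction n with
  | zero => intro x y; rw [pow_zero, Matrix.one_apply]; positivity
  | succ n ih =>
    intro x y
    rw [pow_succ, Matrix.mul_apply]
    exact Finset.sum_nonneg fun z _ => mul_nonneg (ih x z) (h z y)

lemma pow_rowsum {M : Matrix X X ℝ} (h : ∀ x, ∑ y : X, M x y = 1) (n : ℕ) :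
    ∀ x, ∑ y : X, (M ^ n) x y = 1 := by
  induction n with
  | zero => intro x; simp [Matrix.one_apply]
  | succ n ih =>
    intro x
    simp only [pow_succ, Matrix.mul_apply]
    rw [Finset.sum_comm]
    calc ∑ z : X, ∑ y : X, (M ^ n) x z * M z y
        = ∑ z : X, (M ^ n) x z * ∑ y : X, M z y := by
          exact Finset.sum_congr rfl fun z _ => by rw [Finset.mul_sum]
      _ = 1 := by simp only [h, mul_one]; exact ih x

lemma sum_vecMul_eq {M : Matrix X X ℝ} (h : ∀ x, ∑ y : X, M x y = 1) (v : X → ℝ) :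
    ∑ y : X, (v ᵥ* M) y = ∑ x : X, v x := by
  simp only [Matrix.vecMul, dotProduct]
  rw [Finset.sum_comm]
  exact Finset.sum_congr rfl fun x _ => by rw [← Finset.mul_sum, h, mul_one]

lemma doeblin_step {M : Matrix X X ℝ} {δ : ℝ} (hδ : ∀ x y, δ ≤ M x y)
    (hrow : ∀ x, ∑ y : X, M x y = 1) (v : X → ℝ) (hv : ∑ x : X, v x = 0) :
    ∑ y : X, |(v ᵥ* M) y| ≤ (1 - Fintype.card X * δ) * ∑ x : X, |v x| := by
  have key : ∀ y, (v ᵥ* M) y = ∑ x : X, v x * (M x y - δ) := by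
    intro y
    simp only [Matrix.vecMul, dotProduct, mul_sub]
    rw [Finset.sum_sub_distrib, ← Finset.sum_mul, hv, zero_mul, sub_zero]
  calc ∑ y : X, |(v ᵥ* M) y|
      ≤ ∑ y : X, ∑ x : X, |v x| * (M x y - δ) := by
        refine Finset.sum_le_sum fun y _ => ?_
        rw [key]
        refine (Finset.abs_sum_le_sum_abs _ _).trans (Finset.sum_le_sum fun x _ => ?_)
        rw [abs_mul, abs_of_nonneg (sub_nonneg.2 (hδ x y))]
    _ = ∑ x : X, |v x| * (1 - Fintype.card X * δ) := by
        rw [Finset.sum_comm]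
        refine Finset.sum_congr rfl fun x _ => ?_
        rw [← Finset.mul_sum, Finset.sum_sub_distrib, hrow, Finset.sum_const,
          Finset.card_univ, nsmul_eq_mul]
    _ = (1 - Fintype.card X * δ) * ∑ x : X, |v x| := by
        rw [← Finset.sum_mul, mul_comm]

lemma doeblin_iter {M : Matrix X X ℝ} {δ : ℝ} (hδ : ∀ x y, δ ≤ M x y)
    (hrow : ∀ x, ∑ y : X, M x y = 1) (v : X → ℝ) (hv : ∑ x : X, v x = 0) (k : ℕ) :
    ∑ y : X, |(v ᵥ* M ^ k) y| ≤ (1 - Fintype.card X * δ) ^ k * ∑ x : X, |v x| := by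
  have hr : 0 ≤ 1 - Fintype.card X * δ := by
    obtain ⟨x₀⟩ := (inferInstance : Nonempty X)
    have : (Fintype.card X : ℝ) * δ ≤ 1 := by
      calc (Fintype.card X : ℝ) * δ = ∑ _y : X, δ := by
            rw [Finset.sum_const, Finset.card_univ, nsmul_eq_mul]
        _ ≤ ∑ y : X, M x₀ y := Finset.sum_le_sum fun y _ => hδ x₀ y
        _ = 1 := hrow x₀
    linarith
  induction k with
  | zero => simp
  | succ k ih =>
    have hsum : ∑ y : X, (v ᵥ* M ^ k) y = 0 := by rw [sum_vecMul_eq (pow_rowsum hrow k), hv]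
    calc ∑ y : X, |(v ᵥ* M ^ (k + 1)) y|
        = ∑ y : X, |((v ᵥ* M ^ k) ᵥ* M) y| := by
          rw [pow_succ, ← Matrix.vecMul_vecMul]
      _ ≤ (1 - Fintype.card X * δ) * ∑ y : X, |(v ᵥ* M ^ k) y| :=
          doeblin_step hδ hrow _ hsum
      _ ≤ (1 - Fintype.card X * δ) * ((1 - Fintype.card X * δ) ^ k * ∑ x : X, |v x|) :=
          mul_le_mul_of_nonneg_left ih hr
      _ = (1 - Fintype.card X * δ) ^ (k + 1) * ∑ x : X, |v x| := by ring

lemma pow_pos_of_path {M : Matrix X X ℝ} (hnn : ∀ x y, 0 ≤ M x y) {x : X} (c : ℕ → X)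
    (h0 : c 0 = x) : ∀ n : ℕ, (∀ k < n, 0 < M (c k) (c (k + 1))) → 0 < (M ^ n) x (c n) := by
  intro n
  induction n with
  | zero => intro _; rw [← h0, pow_zero, Matrix.one_apply_eq]; norm_num
  | succ n ih =>
    intro hstep
    rw [pow_succ, Matrix.mul_apply]
    refine Finset.sum_pos' (fun z _ => mul_nonneg (pow_entry_nonneg hnn n x z) (hnn z _))
      ⟨c n, Finset.mem_univ _, ?_⟩
    exact mul_pos (ih fun k hk => hstep k (Nat.lt_succ_of_lt hk)) (hstep n (Nat.lt_succ_self n))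

end Doeblin

section Part5
variable {Λ : Type*} [Fintype Λ] [DecidableEq Λ] [Nonempty Λ] {S : Finset ℝ}
variable {P : (Λ → S) → ℝ}

lemma ker_pos_update (hS : S.Nonempty) (hP : ∀ ξ, 0 < P ξ) (ξ : Λ → S) (i : Λ) (s : S) :
    0 < ker P ξ (update ξ i s) := by
  rw [ker, Matrix.of_apply]
  refine mul_pos (by positivity) ?_
  refine Finset.sum_pos' (fun i' _ => Finset.sum_nonneg fun s' _ =>
    mul_nonneg (condC_nonneg hS hP i' ξ s') (by positivity)) ⟨i, Finset.mem_univ _, ?_⟩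
  refine Finset.sum_pos' (fun s' _ =>
    mul_nonneg (condC_nonneg hS hP i ξ s') (by positivity)) ⟨s, Finset.mem_univ _, ?_⟩
  rw [if_pos rfl, mul_one]
  exact div_pos (hP _) (Zpos hS hP i ξ)

lemma ker_pow_card_pos (hS : S.Nonempty) (hP : ∀ ξ, 0 < P ξ) (ξ η : Λ → S) :
    0 < ((ker P) ^ (Fintype.card Λ)) ξ η := by
  set m := Fintype.card Λ with hm
  set e := Fintype.equivFin Λ with he
  set c : ℕ → (Λ → S) := fun k j => if (e j : ℕ) < k then η j else ξ j with hc
  have h0 : c 0 = ξ := by funext j; simp [hc]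
  have hend : c m = η := by funext j; simp [hc, hm, (e j).isLt]
  haveI : Nonempty (Λ → S) := ⟨ξ⟩
  have hstepall : ∀ k < m, 0 < ker P (c k) (c (k + 1)) := by
    intro k hk
    have hstep : c (k + 1) = update (c k) (e.symm ⟨k, hk⟩) (η (e.symm ⟨k, hk⟩)) := by
      funext j
      by_cases hj : j = e.symm ⟨k, hk⟩
      · subst hj
        simp [hc, Nat.lt_succ_self]
      · rw [update_of_ne hj]
        have hne : (e j : ℕ) ≠ k := by
          intro hkk
          apply hj
          have : e j = ⟨k, hk⟩ := Fin.ext hkk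
          rw [← this, Equiv.symm_apply_apply]
        simp only [hc]
        have : (e j : ℕ) < k + 1 ↔ (e j : ℕ) < k := by omega
        rw [if_congr this rfl rfl]
    rw [hstep]
    exact ker_pos_update hS hP (c k) _ _
  have key := pow_pos_of_path (M := ker P) (ker_nonneg hS hP) c h0 m hstepall
  rwa [hend] at key

lemma ker_vecMul_stationary (hS : S.Nonempty) (hP : ∀ ξ, 0 < P ξ) (n : ℕ) :
    P ᵥ* (ker P) ^ n = P := by
  have h1 : P ᵥ* ker P = P := by
    funext η
    simpa [Matrix.vecMul, dotProduct] using ker_stationary hS hP η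
  induction n with
  | zero => simp
  | succ n ih => rw [pow_succ, ← Matrix.vecMul_vecMul, ih, h1]

lemma vecMul_nonneg' {μ : (Λ → S) → ℝ} (hμ : ∀ ξ, 0 ≤ μ ξ) {M : Matrix (Λ → S) (Λ → S) ℝ}
    (hM : ∀ x y, 0 ≤ M x y) (η : Λ → S) : 0 ≤ (μ ᵥ* M) η :=
  Finset.sum_nonneg fun ξ _ => mul_nonneg (hμ ξ) (hM ξ η)

end Part5

/-- **Holley's inequality.** Let `S` be a finite subset of `ℝ`, `Λ` a finite index set, and
`P, P'` two probability measures on `S^Λ` giving positive weight to every configuration.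
If for every site `i` and configurations `ξ ≤ ξ'` the single-site conditional distribution
of `P` at `i` given `ξ` off `i` is stochastically dominated by that of `P'` at `i` given
`ξ'` off `i`, then `P` is stochastically dominated by `P'`. -/
theorem holley_inequality {Λ : Type*} [Fintype Λ] [DecidableEq Λ] [Nonempty Λ]
    (S : Finset ℝ) (hS : S.Nonempty)
    (P P' : (Λ → S) → ℝ)
    (hPpos : ∀ ξ, 0 < P ξ) (hP'pos : ∀ ξ, 0 < P' ξ)
    (hPsum : ∑ ξ : Λ → S, P ξ = 1) (hP'sum : ∑ ξ : Λ → S, P' ξ = 1)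
    (hcond : ∀ (i : Λ) (ξ ξ' : Λ → S), ξ ≤ ξ' →
      ∀ g : S → ℝ, Monotone g →
        (∑ s : S, P (Function.update ξ i s) * g s) /
          (∑ s : S, P (Function.update ξ i s)) ≤
        (∑ s : S, P' (Function.update ξ' i s) * g s) /
          (∑ s : S, P' (Function.update ξ' i s))) :
    ∀ f : (Λ → S) → ℝ, Monotone f →
      ∑ ξ : Λ → S, P ξ * f ξ ≤ ∑ ξ : Λ → S, P' ξ * f ξ := by
  intro f hf
  classical
  haveI hSne : Nonempty S := ⟨⟨hS.choose, hS.choose_spec⟩⟩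
  haveI hXne : Nonempty (Λ → S) := ⟨fun _ => Classical.arbitrary S⟩
  set m := Fintype.card Λ with hm
  set N := Fintype.card (Λ → S) with hN
  have hNpos : 0 < (N : ℝ) := by exact_mod_cast Fintype.card_pos
  set K := ker P with hK
  set K' := ker P' with hK'
  set u : (Λ → S) → ℝ := fun _ => (N : ℝ)⁻¹ with hu
  have husum : ∑ ξ : Λ → S, u ξ = 1 := by
    simp only [hu, Finset.sum_const, Finset.card_univ, nsmul_eq_mul, ← hN]
    exact mul_inv_cancel₀ hNpos.ne'
  have hun : ∀ ξ, (0:ℝ) ≤ u ξ := fun ξ => by positivity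
  have inv : ∀ n : ℕ, (∀ ξ, 0 ≤ (u ᵥ* K ^ n) ξ) ∧ (∀ ξ, 0 ≤ (u ᵥ* K' ^ n) ξ) ∧
      (∀ g : (Λ → S) → ℝ, Monotone g →
        ∑ ξ : Λ → S, (u ᵥ* K ^ n) ξ * g ξ ≤ ∑ ξ : Λ → S, (u ᵥ* K' ^ n) ξ * g ξ) := by
    intro n
    induction n with
    | zero =>
      simp only [pow_zero, Matrix.vecMul_one]
      exact ⟨hun, hun, fun g _ => le_refl _⟩
    | succ n ih =>
      obtain ⟨h1, h2, h3⟩ := ih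
      have e1 : u ᵥ* K ^ (n+1) = (u ᵥ* K ^ n) ᵥ* K := by
        rw [pow_succ, ← Matrix.vecMul_vecMul]
      have e2 : u ᵥ* K' ^ (n+1) = (u ᵥ* K' ^ n) ᵥ* K' := by
        rw [pow_succ, ← Matrix.vecMul_vecMul]
      refine ⟨?_, ?_, ?_⟩
      · intro ξ; rw [e1]; exact vecMul_nonneg' h1 (ker_nonneg hS hPpos) ξ
      · intro ξ; rw [e2]; exact vecMul_nonneg' h2 (ker_nonneg hS hP'pos) ξ
      · intro g hg
        rw [e1, e2]
        exact step_preserve hS hPpos hcond _ _ h1 h2 h3 g hg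
  have errbound : ∀ (Q : (Λ → S) → ℝ), (∀ ξ, 0 < Q ξ) → (∑ ξ : Λ → S, Q ξ = 1) →
      ∃ r : ℝ, 0 ≤ r ∧ r < 1 ∧ ∀ k : ℕ,
        ∑ η : Λ → S, |(u ᵥ* (ker Q) ^ (m * k)) η - Q η| ≤ 2 * r ^ k := by
    intro Q hQ hQsum
    obtain ⟨p₀, -, hmin⟩ := Finset.exists_min_image (Finset.univ : Finset ((Λ → S) × (Λ → S)))
      (fun p => ((ker Q) ^ m) p.1 p.2)
      ⟨(Classical.arbitrary _, Classical.arbitrary _), Finset.mem_univ _⟩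
    set δ := ((ker Q) ^ m) p₀.1 p₀.2 with hδdef
    have hδpos : 0 < δ := ker_pow_card_pos hS hQ _ _
    have hδle : ∀ x y, δ ≤ ((ker Q) ^ m) x y := fun x y => hmin (x, y) (Finset.mem_univ _)
    have hrow : ∀ x, ∑ y : (Λ → S), ((ker Q) ^ m) x y = 1 :=
      pow_rowsum (ker_rowsum hS hQ) m
    have hNδ : (N : ℝ) * δ ≤ 1 := by
      calc (N:ℝ) * δ = ∑ _y : (Λ → S), δ := by
            rw [Finset.sum_const, Finset.card_univ, nsmul_eq_mul, ← hN]
        _ ≤ ∑ y : (Λ → S), ((ker Q)^m) (Classical.arbitrary _) y :=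
            Finset.sum_le_sum fun y _ => hδle _ y
        _ = 1 := hrow _
    refine ⟨1 - N * δ, by linarith, by nlinarith, ?_⟩
    intro k
    have hv : ∑ ξ : Λ → S, (u ξ - Q ξ) = 0 := by
      rw [Finset.sum_sub_distrib, husum, hQsum, sub_self]
    have hdiff : ∀ η, (u ᵥ* (ker Q) ^ (m * k)) η - Q η = ((u - Q) ᵥ* ((ker Q) ^ m) ^ k) η := by
      intro η
      rw [← pow_mul, Matrix.sub_vecMul, ker_vecMul_stationary hS hQ]
      simp
    have habs : ∑ ξ : Λ → S, |u ξ - Q ξ| ≤ 2 := by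
      calc ∑ ξ : Λ → S, |u ξ - Q ξ| ≤ ∑ ξ : Λ → S, (u ξ + Q ξ) := by
            refine Finset.sum_le_sum fun ξ _ => ?_
            calc |u ξ - Q ξ| ≤ |u ξ| + |Q ξ| := abs_sub _ _
              _ = u ξ + Q ξ := by
                  rw [abs_of_nonneg (hun ξ), abs_of_nonneg (hQ ξ).le]
        _ = 2 := by rw [Finset.sum_add_distrib, husum, hQsum]; norm_num
    calc ∑ η : Λ → S, |(u ᵥ* (ker Q) ^ (m * k)) η - Q η|
        = ∑ η : Λ → S, |((u - Q) ᵥ* ((ker Q) ^ m) ^ k) η| := by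
          exact Finset.sum_congr rfl fun η _ => by rw [hdiff]
      _ ≤ (1 - N * δ) ^ k * ∑ ξ : Λ → S, |(u - Q) ξ| := by
          have := doeblin_iter hδle hrow (u - Q) (by simpa using hv) k
          simpa [hN] using this
      _ ≤ (1 - N * δ) ^ k * 2 := by
          refine mul_le_mul_of_nonneg_left ?_ (pow_nonneg (by linarith) k)
          simpa using habs
      _ = 2 * (1 - N * δ) ^ k := mul_comm _ _
  set C := Finset.univ.sup' ⟨Classical.arbitrary _, Finset.mem_univ _⟩
    (fun ξ : Λ → S => |f ξ|) with hC
  have hCle : ∀ ξ : Λ → S, |f ξ| ≤ C := by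
    intro ξ
    rw [hC]
    exact Finset.le_sup' (fun ξ : Λ → S => |f ξ|) (Finset.mem_univ ξ)
  have hC0 : 0 ≤ C := le_trans (abs_nonneg _) (hCle (Classical.arbitrary _))
  have exdiff : ∀ (a b : (Λ → S) → ℝ),
      |∑ ξ : Λ → S, a ξ * f ξ - ∑ ξ : Λ → S, b ξ * f ξ| ≤ C * ∑ ξ : Λ → S, |a ξ - b ξ| := by
    intro a b
    rw [← Finset.sum_sub_distrib]
    refine (Finset.abs_sum_le_sum_abs _ _).trans ?_
    rw [Finset.mul_sum]
    refine Finset.sum_le_sum fun ξ _ => ?_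
    rw [← sub_mul, abs_mul, mul_comm]
    exact mul_le_mul_of_nonneg_right (hCle ξ) (abs_nonneg _)
  obtain ⟨r, hr0, hr1, hrb⟩ := errbound P hPpos hPsum
  obtain ⟨r', hr'0, hr'1, hr'b⟩ := errbound P' hP'pos hP'sum
  have main : ∀ k : ℕ, ∑ ξ : Λ → S, P ξ * f ξ ≤
      ∑ ξ : Λ → S, P' ξ * f ξ + C * (2 * r ^ k) + C * (2 * r' ^ k) := by
    intro k
    have hA : |∑ ξ : Λ → S, P ξ * f ξ - ∑ ξ : Λ → S, (u ᵥ* K ^ (m*k)) ξ * f ξ|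
        ≤ C * (2 * r ^ k) := by
      refine (exdiff P _).trans (mul_le_mul_of_nonneg_left ?_ hC0)
      calc ∑ ξ : Λ → S, |P ξ - (u ᵥ* K ^ (m*k)) ξ|
          = ∑ ξ : Λ → S, |(u ᵥ* K ^ (m*k)) ξ - P ξ| :=
            Finset.sum_congr rfl fun ξ _ => abs_sub_comm _ _
        _ ≤ 2 * r ^ k := hrb k
    have hB : |∑ ξ : Λ → S, P' ξ * f ξ - ∑ ξ : Λ → S, (u ᵥ* K' ^ (m*k)) ξ * f ξ|
        ≤ C * (2 * r' ^ k) := by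
      refine (exdiff P' _).trans (mul_le_mul_of_nonneg_left ?_ hC0)
      calc ∑ ξ : Λ → S, |P' ξ - (u ᵥ* K' ^ (m*k)) ξ|
          = ∑ ξ : Λ → S, |(u ᵥ* K' ^ (m*k)) ξ - P' ξ| :=
            Finset.sum_congr rfl fun ξ _ => abs_sub_comm _ _
        _ ≤ 2 * r' ^ k := hr'b k
    have hmid := (inv (m*k)).2.2 f hf
    have hA' := abs_le.1 hA
    have hB' := abs_le.1 hB
    obtain ⟨hA1, hA2⟩ := hA'
    obtain ⟨hB1, hB2⟩ := hB'
    linarith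
  have t1 : Filter.Tendsto (fun k : ℕ => C * (2 * r ^ k)) Filter.atTop (nhds 0) := by
    have := (tendsto_pow_atTop_nhds_zero_of_lt_one hr0 hr1).const_mul (C * 2)
    simpa [mul_assoc] using this
  have t2 : Filter.Tendsto (fun k : ℕ => C * (2 * r' ^ k)) Filter.atTop (nhds 0) := by
    have := (tendsto_pow_atTop_nhds_zero_of_lt_one hr'0 hr'1).const_mul (C * 2)
    simpa [mul_assoc] using this
  have tends : Filter.Tendsto (fun k : ℕ => ∑ ξ : Λ → S, P' ξ * f ξ
      + C * (2 * r ^ k) + C * (2 * r' ^ k)) Filter.atTop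
      (nhds (∑ ξ : Λ → S, P' ξ * f ξ)) := by
    have t0 : Filter.Tendsto (fun _ : ℕ => ∑ ξ : Λ → S, P' ξ * f ξ) Filter.atTop
        (nhds (∑ ξ : Λ → S, P' ξ * f ξ)) := tendsto_const_nhds
    have t3 := (t0.add t1).add t2
    simpa using t3
  exact ge_of_tendsto' tends main
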